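/- arXiv:1305.7009 — 2 statements merged into one kernel-verified Lean document; each statement's English description precedes it below -/
import Mathlib

section
/- Fix η ∈ (2/3, √3−1] and the trine directions n₁, n₂, n₃ in the ZX plane. For each pair (ij), let G^{ij} be the parametric joint-measurement family with α = α(η) = 1 − η²/2 and a = a(η) = (0, √(1 + η⁴/4 − 2η²), 0). Then for the state ρ = |ψ⟩⟨ψ| with ψ = (1/√2)(1, i)ᵀ, the average anticorrelation probability satisfies R₃(ρ) = 1/2 + η²/4 + (1/2)√(1 + η⁴/4 − 2η²) = (1 − η/3) + C(η)/6. -/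
open Matrix ComplexOrder

noncomputable section

abbrev Mat2 := Matrix (Fin 2) (Fin 2) ℂ

/-- Pauli matrix σ₁. -/
def σ1 : Mat2 := !![0, 1; 1, 0]
/-- Pauli matrix σ₂. -/
def σ2 : Mat2 := !![0, -Complex.I; Complex.I, 0]
/-- Pauli matrix σ₃. -/
def σ3 : Mat2 := !![1, 0; 0, -1]

/-- σ·a for a real 3-vector a. -/
def pauli (a : Fin 3 → ℝ) : Mat2 := (a 0 : ℂ) • σ1 + (a 1 : ℂ) • σ2 + (a 2 : ℂ) • σ3

/-- Euclidean inner product on ℝ³. -/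
def dot3 (a b : Fin 3 → ℝ) : ℝ := a 0 * b 0 + a 1 * b 1 + a 2 * b 2

/-- Euclidean norm on ℝ³. -/
def norm3 (a : Fin 3 → ℝ) : ℝ := Real.sqrt (dot3 a a)

/-- A qubit effect: both `E` and `I - E` positive semidefinite. -/
def IsEffect (E : Mat2) : Prop := E.PosSemidef ∧ (1 - E).PosSemidef

/-- A qubit density matrix. -/
def IsDensity (ρ : Mat2) : Prop := ρ.PosSemidef ∧ ρ.trace = 1

/-- E₊ = (1/2)(I + η σ·n). -/
def Epos (η : ℝ) (n : Fin 3 → ℝ) : Mat2 := (1/2 : ℂ) • (1 + (η : ℂ) • pauli n)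
/-- E₋ = (1/2)(I - η σ·n). -/
def Eneg (η : ℝ) (n : Fin 3 → ℝ) : Mat2 := (1/2 : ℂ) • (1 - (η : ℂ) • pauli n)

/-- A pairwise joint measurement of the noisy spin-1/2 observables along nᵢ and nⱼ. -/
def IsJointMmt (η : ℝ) (ni nj : Fin 3 → ℝ) (Gpp Gpm Gmp Gmm : Mat2) : Prop :=
  IsEffect Gpp ∧ IsEffect Gpm ∧ IsEffect Gmp ∧ IsEffect Gmm ∧
  Gpp + Gpm = Epos η ni ∧ Gmp + Gmm = Eneg η ni ∧
  Gpp + Gmp = Epos η nj ∧ Gpm + Gmm = Eneg η nj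

/-- Average anticorrelation probability R₃(ρ), given the anticorrelation effects of the
three pairwise joint measurements. -/
def R3 (ρ G12pm G12mp G13pm G13mp G23pm G23mp : Mat2) : ℝ :=
  (1/3) * ((ρ * (G12pm + G12mp)).trace.re + (ρ * (G13pm + G13mp)).trace.re +
    (ρ * (G23pm + G23mp)).trace.re)

/-- Parametric joint-measurement family. -/
def Gpp (η : ℝ) (ni nj : Fin 3 → ℝ) (α : ℝ) (a : Fin 3 → ℝ) : Mat2 :=
  (1/2 : ℂ) • (((α/2 : ℝ) : ℂ) • (1 : Mat2) + pauli ((1/2 : ℝ) • (η • (ni + nj) - a)))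
def Gpm (η : ℝ) (ni nj : Fin 3 → ℝ) (α : ℝ) (a : Fin 3 → ℝ) : Mat2 :=
  (1/2 : ℂ) • (((1 - α/2 : ℝ) : ℂ) • (1 : Mat2) + pauli ((1/2 : ℝ) • (η • (ni - nj) + a)))
def Gmp (η : ℝ) (ni nj : Fin 3 → ℝ) (α : ℝ) (a : Fin 3 → ℝ) : Mat2 :=
  (1/2 : ℂ) • (((1 - α/2 : ℝ) : ℂ) • (1 : Mat2) + pauli ((1/2 : ℝ) • (-(η • ni) + η • nj + a)))
def Gmm (η : ℝ) (ni nj : Fin 3 → ℝ) (α : ℝ) (a : Fin 3 → ℝ) : Mat2 :=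
  (1/2 : ℂ) • (((α/2 : ℝ) : ℂ) • (1 : Mat2) + pauli ((1/2 : ℝ) • (-(η • (ni + nj)) - a)))

/-- Trine directions in the ZX plane. -/
def tn1 : Fin 3 → ℝ := ![0, 0, 1]
def tn2 : Fin 3 → ℝ := ![Real.sqrt 3 / 2, 0, -(1/2)]
def tn3 : Fin 3 → ℝ := ![-(Real.sqrt 3 / 2), 0, -(1/2)]

/-- sign of a Boolean, as ±1. -/
def sgn (b : Bool) : ℝ := if b then 1 else -1

/-- m_X = Σₖ Xₖ nₖ. -/
def mvec {N : ℕ} (n : Fin N → Fin 3 → ℝ) (X : Fin N → Bool) : Fin 3 → ℝ :=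
  ∑ k, sgn (X k) • n k

/-- Joint measurability of the N noisy qubit observables. -/
def JointlyMeasurable {N : ℕ} (η : ℝ) (n : Fin N → Fin 3 → ℝ) : Prop :=
  ∃ E : (Fin N → Bool) → Mat2,
    (∀ X, IsEffect (E X)) ∧ (∑ X, E X) = 1 ∧
    (∀ k, ∑ X ∈ Finset.univ.filter (fun X => X k = true), E X = Epos η (n k)) ∧
    (∀ k, ∑ X ∈ Finset.univ.filter (fun X => X k = false), E X = Eneg η (n k))


/-- a(η) = (0, √(1 + η⁴/4 - 2η²), 0). -/
def aopt (η : ℝ) : Fin 3 → ℝ := ![0, Real.sqrt (1 + η^4/4 - 2*η^2), 0]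

/-- α(η) = 1 - η²/2. -/
def αopt (η : ℝ) : ℝ := 1 - η^2/2

/-- C(η) = 2η + 3(√(1 + η⁴/4 - 2η²) - (1 - η²/2)). -/
def Cfun (η : ℝ) : ℝ := 2*η + 3*(Real.sqrt (1 + η^4/4 - 2*η^2) - (1 - η^2/2))

/-- The state ρ = |ψ⟩⟨ψ| with ψ = (1/√2)(1, i)ᵀ. -/
def ρopt : Mat2 := !![1/2, -Complex.I/2; Complex.I/2, 1/2]

lemma pauli_add (x y : Fin 3 → ℝ) : pauli (x + y) = pauli x + pauli y := by
  simp only [pauli, Pi.add_apply, Complex.ofReal_add, add_smul]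
  abel

lemma GpmGmp_sum (η α : ℝ) (ni nj a : Fin 3 → ℝ) :
    Gpm η ni nj α a + Gmp η ni nj α a
      = (1/2 : ℂ) • (((2 - α : ℝ) : ℂ) • (1 : Mat2) + pauli a) := by
  have hv : (1/2 : ℝ) • (η • (ni - nj) + a) + (1/2 : ℝ) • (-(η • ni) + η • nj + a) = a := by
    funext k
    simp only [Pi.add_apply, Pi.smul_apply, Pi.sub_apply, Pi.neg_apply, smul_eq_mul]
    ring
  unfold Gpm Gmp
  rw [← smul_add, add_add_add_comm, ← pauli_add, hv]
  rw [← add_smul]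
  congr 2
  push_cast
  ring

lemma trace_calc (s c : ℝ) :
    ((ρopt * ((1/2 : ℂ) • (((c : ℝ) : ℂ) • (1 : Mat2) + pauli ![0, s, 0]))).trace).re
      = (1/2) * (c + s) := by
  simp only [ρopt, pauli, σ1, σ2, σ3, Matrix.one_fin_two]
  norm_num [Matrix.trace, Matrix.mul_apply, Fin.sum_univ_two, Matrix.smul_apply,
    Matrix.add_apply, Matrix.cons_val_zero, Matrix.cons_val_one, Matrix.head_cons,
    smul_eq_mul, Complex.add_re, Complex.mul_re, Complex.ofReal_re, Complex.ofReal_im,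
    Complex.I_re, Complex.I_im, Complex.mul_im, Complex.add_im, Complex.neg_re,
    Complex.neg_im, Complex.div_re, Complex.div_im]
  ring

/-- For trine axes in the ZX plane, sharpness η ∈ (2/3, √3 - 1], the parametric joint
measurements with α(η), a(η), and the state ψ = (1/√2)(1, i)ᵀ, the average anticorrelation
is R₃ = 1/2 + η²/4 + (1/2)√(1 + η⁴/4 - 2η²) = (1 - η/3) + C(η)/6. -/
theorem R3_value_trine (η : ℝ) (hη : η ∈ Set.Ioc (2/3 : ℝ) (Real.sqrt 3 - 1)) :
    R3 ρopt
      (Gpm η tn1 tn2 (αopt η) (aopt η)) (Gmp η tn1 tn2 (αopt η) (aopt η))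
      (Gpm η tn1 tn3 (αopt η) (aopt η)) (Gmp η tn1 tn3 (αopt η) (aopt η))
      (Gpm η tn2 tn3 (αopt η) (aopt η)) (Gmp η tn2 tn3 (αopt η) (aopt η))
      = 1/2 + η^2/4 + (1/2) * Real.sqrt (1 + η^4/4 - 2*η^2) ∧
    1/2 + η^2/4 + (1/2) * Real.sqrt (1 + η^4/4 - 2*η^2) = (1 - η/3) + Cfun η / 6 := by
  have ha : aopt η = ![0, Real.sqrt (1 + η^4/4 - 2*η^2), 0] := rfl
  constructor
  · rw [R3, GpmGmp_sum, GpmGmp_sum, GpmGmp_sum, ha, trace_calc]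
    rw [αopt]
    ring
  · rw [Cfun]; ring

end
end

section
/- Fix η ∈ (2/3, √3−1] and the trine directions n₁, n₂, n₃ in the ZX plane. For each pair (ij) ∈ {(12),(13),(23)}, the four matrices of the parametric joint-measurement family with α = α(η) = 1 − η²/2 and a = a(η) = (0, √(1 + η⁴/4 − 2η²), 0) are qubit effects, they sum to the identity, and they satisfy the marginal conditions, i.e., they form a pairwise joint measurement of the noisy spin-1/2 observables along n_i and n_j with sharpness η. -/
open Matrix ComplexOrder

noncomputable section

/-- The four matrices of the parametric family with parameters α(η), a(η) form a valid
pairwise joint measurement (qubit effects, correct marginals) and sum to the identity. -/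
def GoodJoint (η : ℝ) (ni nj : Fin 3 → ℝ) : Prop :=
  IsJointMmt η ni nj
    (Gpp η ni nj (αopt η) (aopt η)) (Gpm η ni nj (αopt η) (aopt η))
    (Gmp η ni nj (αopt η) (aopt η)) (Gmm η ni nj (αopt η) (aopt η)) ∧
  Gpp η ni nj (αopt η) (aopt η) + Gpm η ni nj (αopt η) (aopt η) +
    Gmp η ni nj (αopt η) (aopt η) + Gmm η ni nj (αopt η) (aopt η) = 1


section AuxProofs

lemma real_aux (A D P Q B T : ℝ) (hA : 0 ≤ A) (hD : 0 ≤ D) (hP : 0 ≤ P) (hQ : 0 ≤ Q)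
    (h : B ≤ A * D) (hT : T ^ 2 ≤ B * (P * Q)) : 0 ≤ A * P + D * Q + 2 * T := by
  nlinarith [sq_nonneg (A * P - D * Q), mul_le_mul_of_nonneg_right h (mul_nonneg hP hQ),
    mul_nonneg hA hP, mul_nonneg hD hQ, sq_nonneg T]

lemma psd2 (a d : ℝ) (b : ℂ) (ha : 0 ≤ a) (hd : 0 ≤ d)
    (h : Complex.normSq b ≤ a * d) :
    (!![(a:ℂ), b; (starRingEnd ℂ) b, (d:ℂ)] : Mat2).PosSemidef := by
  rw [posSemidef_iff_dotProduct_mulVec]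
  constructor
  · ext i j
    fin_cases i <;> fin_cases j <;>
      simp [Matrix.conjTranspose_apply, Complex.ext_iff]
  · intro x
    have e : star x ⬝ᵥ (!![(a:ℂ), b; (starRingEnd ℂ) b, (d:ℂ)] : Mat2).mulVec x =
        ((a * Complex.normSq (x 0) + d * Complex.normSq (x 1)
          + 2 * (b * (starRingEnd ℂ) (x 0) * x 1).re : ℝ) : ℂ) := by
      simp [dotProduct, Matrix.mulVec, Fin.sum_univ_two, Complex.ext_iff,
        Complex.normSq_apply, Complex.add_re, Complex.mul_re, Complex.mul_im]
      constructor <;> ring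
    rw [e, Complex.zero_le_real]
    set x0 := x 0; set x1 := x 1
    have h1 : Complex.normSq (b * (starRingEnd ℂ) x0 * x1) =
        Complex.normSq b * (Complex.normSq x0 * Complex.normSq x1) := by
      rw [Complex.normSq_mul, Complex.normSq_mul, Complex.normSq_conj]; ring
    have h2 : (b * (starRingEnd ℂ) x0 * x1).re ^ 2 ≤
        Complex.normSq b * (Complex.normSq x0 * Complex.normSq x1) := by
      rw [← h1, Complex.normSq_apply]; nlinarith [sq_nonneg (b * (starRingEnd ℂ) x0 * x1).im]
    exact real_aux a d _ _ _ _ ha hd (Complex.normSq_nonneg x0) (Complex.normSq_nonneg x1) h h2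

lemma psd_form (c : ℝ) (v : Fin 3 → ℝ) (hc : 0 ≤ c) (hv : dot3 v v ≤ c ^ 2) :
    ((1/2 : ℂ) • ((c : ℂ) • (1 : Mat2) + pauli v)).PosSemidef := by
  simp only [dot3] at hv
  have key : (1/2 : ℂ) • ((c : ℂ) • (1 : Mat2) + pauli v) =
      !![((((c + v 2)/2 : ℝ)) : ℂ), (((v 0 : ℝ) : ℂ) - (v 1 : ℝ) * Complex.I)/2;
         (starRingEnd ℂ) ((((v 0 : ℝ) : ℂ) - (v 1 : ℝ) * Complex.I)/2), (((c - v 2)/2 : ℝ) : ℂ)] := by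
    ext i j
    fin_cases i <;> fin_cases j <;>
      simp [pauli, σ1, σ2, σ3, Matrix.one_apply, Complex.ext_iff, map_div₀, map_sub,
        _root_.map_mul, Complex.conj_ofReal, Complex.conj_I, Complex.div_re, Complex.div_im,
        Complex.normSq_apply] <;> norm_num <;> ring_nf <;> norm_num
  rw [key]
  apply psd2
  · nlinarith [sq_nonneg (v 0), sq_nonneg (v 1)]
  · nlinarith [sq_nonneg (v 0), sq_nonneg (v 1)]
  · have : Complex.normSq ((((v 0 : ℝ) : ℂ) - (v 1 : ℝ) * Complex.I)/2) =
        ((v 0)^2 + (v 1)^2)/4 := by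
      rw [Complex.normSq_apply]; simp; ring
    rw [this]; nlinarith [sq_nonneg (v 2)]

lemma pauli_neg (v : Fin 3 → ℝ) : pauli (-v) = -pauli v := by
  simp only [pauli, Pi.neg_apply, Complex.ofReal_neg]; module

lemma one_sub_form (c : ℝ) (v : Fin 3 → ℝ) :
    (1 : Mat2) - (1/2 : ℂ) • ((c : ℂ) • (1 : Mat2) + pauli v) =
    (1/2 : ℂ) • (((2 - c : ℝ) : ℂ) • (1 : Mat2) + pauli (-v)) := by
  rw [pauli_neg]; push_cast; module

lemma effect_form (c : ℝ) (v : Fin 3 → ℝ) (hc0 : 0 ≤ c) (hc2 : c ≤ 2)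
    (h1 : dot3 v v ≤ c ^ 2) (h2 : dot3 v v ≤ (2 - c) ^ 2) :
    IsEffect ((1/2 : ℂ) • ((c : ℂ) • (1 : Mat2) + pauli v)) := by
  refine ⟨psd_form c v hc0 h1, ?_⟩
  rw [one_sub_form]
  exact psd_form (2 - c) (-v) (by linarith) (by simpa [dot3, Pi.neg_apply] using h2)

lemma marg1 (η α : ℝ) (ni nj a : Fin 3 → ℝ) :
    Gpp η ni nj α a + Gpm η ni nj α a = Epos η ni := by
  ext i j
  fin_cases i <;> fin_cases j <;>
    simp [Gpp, Gpm, Epos, pauli, σ1, σ2, σ3, Matrix.one_apply] <;> ring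

lemma marg2 (η α : ℝ) (ni nj a : Fin 3 → ℝ) :
    Gmp η ni nj α a + Gmm η ni nj α a = Eneg η ni := by
  ext i j
  fin_cases i <;> fin_cases j <;>
    simp [Gmp, Gmm, Eneg, pauli, σ1, σ2, σ3, Matrix.one_apply] <;> ring

lemma marg3 (η α : ℝ) (ni nj a : Fin 3 → ℝ) :
    Gpp η ni nj α a + Gmp η ni nj α a = Epos η nj := by
  ext i j
  fin_cases i <;> fin_cases j <;>
    simp [Gpp, Gmp, Epos, pauli, σ1, σ2, σ3, Matrix.one_apply] <;> ring

lemma marg4 (η α : ℝ) (ni nj a : Fin 3 → ℝ) :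
    Gpm η ni nj α a + Gmm η ni nj α a = Eneg η nj := by
  ext i j
  fin_cases i <;> fin_cases j <;>
    simp [Gpm, Gmm, Eneg, pauli, σ1, σ2, σ3, Matrix.one_apply] <;> ring

lemma Epos_add_Eneg (η : ℝ) (n : Fin 3 → ℝ) : Epos η n + Eneg η n = 1 := by
  unfold Epos Eneg; module

set_option maxHeartbeats 1000000 in
lemma good_generic (η : ℝ) (hη0 : 0 ≤ η) (hη2 : η ^ 2 ≤ 4 - 2 * Real.sqrt 3)
    (ni nj : Fin 3 → ℝ) (hni1 : ni 1 = 0) (hnj1 : nj 1 = 0)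
    (hii : dot3 ni ni = 1) (hjj : dot3 nj nj = 1) (hij : dot3 ni nj = -(1/2)) :
    GoodJoint η ni nj := by
  have h3 : Real.sqrt 3 ^ 2 = 3 := Real.sq_sqrt (by norm_num)
  have h3n : (0:ℝ) ≤ Real.sqrt 3 := Real.sqrt_nonneg 3
  have h3lt : Real.sqrt 3 < 2 := by nlinarith
  have h3b : η ^ 2 ≤ 4 + 2 * Real.sqrt 3 := by nlinarith
  have hnn : (0:ℝ) ≤ 1 + η ^ 4 / 4 - 2 * η ^ 2 := by
    nlinarith [mul_nonneg (sub_nonneg.2 hη2) (sub_nonneg.2 h3b)]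
  have hs : Real.sqrt (1 + η ^ 4 / 4 - 2 * η ^ 2) ^ 2 = 1 + η ^ 4 / 4 - 2 * η ^ 2 :=
    Real.sq_sqrt hnn
  set s := Real.sqrt (1 + η ^ 4 / 4 - 2 * η ^ 2) with hsdef
  have hη1 : η ^ 2 ≤ 1 := by nlinarith
  simp only [dot3] at hii hjj hij
  rw [hni1] at hii
  rw [hnj1] at hjj
  rw [hni1, hnj1] at hij
  have hak : aopt η 0 = 0 ∧ aopt η 1 = s ∧ aopt η 2 = 0 := by
    refine ⟨?_, ?_, ?_⟩ <;> simp [aopt, hsdef]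
  obtain ⟨ha0, ha1, ha2⟩ := hak
  have hc1a : (0:ℝ) ≤ αopt η / 2 := by unfold αopt; nlinarith
  have hc1b : αopt η / 2 ≤ 1 := by unfold αopt; nlinarith
  have hc2a : (0:ℝ) ≤ 1 - αopt η / 2 := by unfold αopt; nlinarith
  have hc2b : 1 - αopt η / 2 ≤ 1 := by unfold αopt; nlinarith
  have d1 : dot3 ((1/2 : ℝ) • (η • (ni + nj) - aopt η)) ((1/2 : ℝ) • (η • (ni + nj) - aopt η))
      = (αopt η / 2) ^ 2 := by
    simp only [dot3, Pi.smul_apply, Pi.add_apply, Pi.sub_apply, smul_eq_mul,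
      ha0, ha1, ha2, hni1, hnj1, αopt]
    linear_combination (η^2/4) * hii + (η^2/2) * hij + (η^2/4) * hjj + (1/4) * hs
  have d2 : dot3 ((1/2 : ℝ) • (η • (ni - nj) + aopt η)) ((1/2 : ℝ) • (η • (ni - nj) + aopt η))
      = (1 - αopt η / 2) ^ 2 := by
    simp only [dot3, Pi.smul_apply, Pi.add_apply, Pi.sub_apply, smul_eq_mul,
      ha0, ha1, ha2, hni1, hnj1, αopt]
    linear_combination (η^2/4) * hii - (η^2/2) * hij + (η^2/4) * hjj + (1/4) * hs
  have d3 : dot3 ((1/2 : ℝ) • (-(η • ni) + η • nj + aopt η))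
      ((1/2 : ℝ) • (-(η • ni) + η • nj + aopt η)) = (1 - αopt η / 2) ^ 2 := by
    simp only [dot3, Pi.smul_apply, Pi.add_apply, Pi.neg_apply, smul_eq_mul,
      ha0, ha1, ha2, hni1, hnj1, αopt]
    linear_combination (η^2/4) * hii - (η^2/2) * hij + (η^2/4) * hjj + (1/4) * hs
  have d4 : dot3 ((1/2 : ℝ) • (-(η • (ni + nj)) - aopt η))
      ((1/2 : ℝ) • (-(η • (ni + nj)) - aopt η)) = (αopt η / 2) ^ 2 := by
    simp only [dot3, Pi.smul_apply, Pi.add_apply, Pi.sub_apply, Pi.neg_apply, smul_eq_mul,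
      ha0, ha1, ha2, hni1, hnj1, αopt]
    linear_combination (η^2/4) * hii + (η^2/2) * hij + (η^2/4) * hjj + (1/4) * hs
  have epp : IsEffect (Gpp η ni nj (αopt η) (aopt η)) := by
    unfold Gpp
    exact effect_form (αopt η / 2) _ hc1a (by linarith) (le_of_eq d1) (by rw [d1]; nlinarith [hc1a, hc1b])
  have epm : IsEffect (Gpm η ni nj (αopt η) (aopt η)) := by
    unfold Gpm
    exact effect_form (1 - αopt η / 2) _ hc2a (by linarith) (le_of_eq d2) (by rw [d2]; nlinarith [hc2a, hc2b])
  have emp : IsEffect (Gmp η ni nj (αopt η) (aopt η)) := by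
    unfold Gmp
    exact effect_form (1 - αopt η / 2) _ hc2a (by linarith) (le_of_eq d3) (by rw [d3]; nlinarith [hc2a, hc2b])
  have emm : IsEffect (Gmm η ni nj (αopt η) (aopt η)) := by
    unfold Gmm
    exact effect_form (αopt η / 2) _ hc1a (by linarith) (le_of_eq d4) (by rw [d4]; nlinarith [hc1a, hc1b])
  refine ⟨⟨epp, epm, emp, emm, marg1 _ _ _ _ _, marg2 _ _ _ _ _, marg3 _ _ _ _ _,
    marg4 _ _ _ _ _⟩, ?_⟩
  have := marg1 η (αopt η) ni nj (aopt η)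
  have := marg2 η (αopt η) ni nj (aopt η)
  calc Gpp η ni nj (αopt η) (aopt η) + Gpm η ni nj (αopt η) (aopt η) +
      Gmp η ni nj (αopt η) (aopt η) + Gmm η ni nj (αopt η) (aopt η)
      = (Gpp η ni nj (αopt η) (aopt η) + Gpm η ni nj (αopt η) (aopt η)) +
        (Gmp η ni nj (αopt η) (aopt η) + Gmm η ni nj (αopt η) (aopt η)) := by abel
    _ = Epos η ni + Eneg η ni := by rw [marg1, marg2]
    _ = 1 := Epos_add_Eneg η ni

end AuxProofs

/-- For trine axes in the ZX plane and any η ∈ (2/3, √3 - 1], the parametric family with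
α(η) = 1 - η²/2 and a(η) = (0, √(1 + η⁴/4 - 2η²), 0) gives, for each of the three pairs,
a valid pairwise joint measurement of the corresponding noisy spin-1/2 observables. -/
theorem parametric_family_is_joint_measurement
    (η : ℝ) (hη : η ∈ Set.Ioc (2/3 : ℝ) (Real.sqrt 3 - 1)) :
    GoodJoint η tn1 tn2 ∧ GoodJoint η tn1 tn3 ∧ GoodJoint η tn2 tn3 := by
  obtain ⟨hl, hr⟩ := hη
  have h3 : Real.sqrt 3 ^ 2 = 3 := Real.sq_sqrt (by norm_num)
  have h3n : (0:ℝ) ≤ Real.sqrt 3 := Real.sqrt_nonneg 3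
  have hη0 : (0:ℝ) ≤ η := by linarith
  have hη2 : η ^ 2 ≤ 4 - 2 * Real.sqrt 3 := by
    nlinarith [sq_nonneg (η - (Real.sqrt 3 - 1))]
  have h11 : dot3 tn1 tn1 = 1 := by simp [dot3, tn1]
  have h22 : dot3 tn2 tn2 = 1 := by
    simp [dot3, tn2]; nlinarith
  have h33 : dot3 tn3 tn3 = 1 := by
    simp [dot3, tn3]; nlinarith
  have h12 : dot3 tn1 tn2 = -(1/2) := by simp [dot3, tn1, tn2]
  have h13 : dot3 tn1 tn3 = -(1/2) := by simp [dot3, tn1, tn3]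
  have h23 : dot3 tn2 tn3 = -(1/2) := by
    simp [dot3, tn2, tn3]; nlinarith
  exact ⟨good_generic η hη0 hη2 tn1 tn2 (by simp [tn1]) (by simp [tn2]) h11 h22 h12,
    good_generic η hη0 hη2 tn1 tn3 (by simp [tn1]) (by simp [tn3]) h11 h33 h13,
    good_generic η hη0 hη2 tn2 tn3 (by simp [tn2]) (by simp [tn3]) h22 h33 h23⟩


end
end
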